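/- Let T be a tree with at least one non-leaf vertex, and let T' be the tree obtained from T by deleting all leaves of T. Then b(T) ≤ b(T') + 1. -/

import Mathlib

open SimpleGraph

/-- A graph is `k`-burnable if there is a sequence of `k` vertices `v 0, …, v (k-1)`
(`v i` being set on fire at step `i+1`) whose closed balls of radii `k-1-i` cover the graph. -/
def Burnable {V : Type*} (G : SimpleGraph V) (k : ℕ) : Prop :=
  ∃ v : Fin k → V, ∀ u : V, ∃ i : Fin k,
    G.Reachable (v i) u ∧ G.dist (v i) u ≤ k - 1 - (i : ℕ)

/-- The burning number of a graph: the least `k` such that `G` is `k`-burnable. -/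
noncomputable def burningNumber {V : Type*} (G : SimpleGraph V) : ℕ :=
  sInf {k | Burnable G k}

/-- The inclusion homomorphism from an induced subgraph. -/
def inclHom {V : Type*} (G : SimpleGraph V) (s : Set V) : G.induce s →g G where
  toFun := Subtype.val
  map_rel' := fun h => h

lemma dist_coe_le {V : Type*} (G : SimpleGraph V) (s : Set V) (a b : s)
    (h : (G.induce s).Reachable a b) : G.dist a.1 b.1 ≤ (G.induce s).dist a b := by
  obtain ⟨p, hp⟩ := h.exists_walk_length_eq_dist
  calc G.dist a.1 b.1 ≤ (p.map (inclHom G s)).length := SimpleGraph.dist_le _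
    _ = (G.induce s).dist a b := by rw [SimpleGraph.Walk.length_map, hp]

theorem burning_delete_leaves {V : Type*} [Fintype V] (T : SimpleGraph V)
    [DecidableRel T.Adj] (hT : T.IsTree) (hnl : ∃ v : V, T.degree v ≠ 1) :
    burningNumber T ≤ burningNumber (T.induce {v : V | T.degree v ≠ 1}) + 1 := by
  obtain ⟨w, hw⟩ := hnl
  set s : Set V := {v : V | T.degree v ≠ 1} with hs
  have hws : w ∈ s := hw
  have hconn := hT.isConnected
  -- the burnable set for the induced graph is nonempty
  have hne : Burnable (T.induce s) (Fintype.card s) := by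
    refine ⟨(Fintype.equivFin s).symm, fun u => ⟨Fintype.equivFin s u, ?_⟩⟩
    simp only [Equiv.symm_apply_apply]
    exact ⟨SimpleGraph.Reachable.refl u, by simp [SimpleGraph.dist_self]⟩
  set k := burningNumber (T.induce s) with hk
  have hbk : Burnable (T.induce s) k := Nat.sInf_mem (s := {k | Burnable (T.induce s) k}) ⟨_, hne⟩
  obtain ⟨v, hv⟩ := hbk
  -- a leaf's neighbor is not a leaf
  have key : ∀ u u' : V, T.degree u = 1 → T.Adj u u' → T.degree u' ≠ 1 := by
    intro u u' hu hadj hu'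
    obtain ⟨a, ha⟩ := Finset.card_eq_one.mp hu
    obtain ⟨a', ha'⟩ := Finset.card_eq_one.mp hu'
    have hau : a = u' := by
      have : u' ∈ T.neighborFinset u := (T.mem_neighborFinset u u').mpr hadj
      rw [ha] at this; exact (Finset.mem_singleton.mp this).symm
    have hau' : a' = u := by
      have : u ∈ T.neighborFinset u' := (T.mem_neighborFinset u' u).mpr hadj.symm
      rw [ha'] at this; exact (Finset.mem_singleton.mp this).symm
    -- any vertex reachable from u is u or u'
    have hstep : ∀ (x : V) (p : T.Walk x w), x = u ∨ x = u' → w = u ∨ w = u' := by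
      intro x p
      induction p with
      | nil => intro h; exact h
      | @cons x c _ hxc q ih =>
        rintro (rfl | rfl)
        · apply ih hw hws
          have : c ∈ T.neighborFinset x := (T.mem_neighborFinset x c).mpr hxc
          rw [ha] at this
          right; rw [← hau]; exact Finset.mem_singleton.mp this
        · apply ih hw hws
          have : c ∈ T.neighborFinset x := (T.mem_neighborFinset x c).mpr hxc
          rw [ha'] at this
          left; rw [← hau']; exact Finset.mem_singleton.mp this
    obtain ⟨p⟩ := hconn u w
    rcases hstep u p (Or.inl rfl) with rfl | rfl
    · exact hw hu
    · exact hw hu'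
  -- T is (k+1)-burnable
  have hburn : Burnable T (k + 1) := by
    refine ⟨Fin.snoc (fun i => (v i).1) w, fun u => ?_⟩
    by_cases hu : T.degree u = 1
    · -- u is a leaf: use a vertex covering its neighbor
      obtain ⟨u', hu'⟩ := Finset.card_eq_one.mp hu
      have hadj : T.Adj u u' := by
        have : u' ∈ T.neighborFinset u := by rw [hu']; exact Finset.mem_singleton_self u'
        exact (T.mem_neighborFinset u u').mp this
      have hu's : u' ∈ s := key u u' hu hadj
      obtain ⟨i, hreach, hdist⟩ := hv ⟨u', hu's⟩
      refine ⟨i.castSucc, ?_, ?_⟩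
      · exact hconn.preconnected _ u
      · have h1 : T.dist (v i).1 u ≤ T.dist (v i).1 u' + T.dist u' u :=
          hconn.dist_triangle
        have h2 : T.dist (v i).1 u' ≤ (T.induce s).dist (v i) ⟨u', hu's⟩ :=
          dist_coe_le T s _ _ hreach
        have h3 : T.dist u' u = 1 := SimpleGraph.dist_eq_one_iff_adj.mpr hadj.symm
        simp only [Fin.snoc_castSucc, Fin.coe_castSucc]
        have hik : (i : ℕ) < k := i.2
        omega
    · -- u is not a leaf
      obtain ⟨i, hreach, hdist⟩ := hv ⟨u, hu⟩
      refine ⟨i.castSucc, hconn.preconnected _ u, ?_⟩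
      have h2 : T.dist (v i).1 u ≤ (T.induce s).dist (v i) ⟨u, hu⟩ :=
        dist_coe_le T s _ _ hreach
      simp only [Fin.snoc_castSucc, Fin.coe_castSucc]
      have hik : (i : ℕ) < k := i.2
      omega
  exact Nat.sInf_le hburn
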